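/- Under the biased 2-choices rule, if ε'(t) = ε' with ε' ≥ 2λ_n², B_t ≥ nγ and n·ε'² ≥ log n, and E[Δ(t) | ε'(t) = ε'] ≥ (B_t q_1/2)c·ε', and Δ(t) is a sum of at most n independent random variables each ranging over an interval of length 1, then P(Δ(t) ≤ (B_t q_1/4)c·ε' | ε'(t) = ε') ≤ 2/n^α where α = γ²q_1²c²/8. -/

import Mathlib

open MeasureTheory ProbabilityTheory Finset

open Real


/-- Core inequality for Hoeffding's lemma. -/
lemma hoeff_core {p : ℝ} (hp0 : 0 ≤ p) (hp1 : p ≤ 1) (t : ℝ) :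
    1 - p + p * exp t ≤ exp (p * t + t ^ 2 / 8) := by
  set D : ℝ → ℝ := fun x => 1 - p + p * exp x with hDdef
  have hDpos : ∀ x, 0 < D x := by
    intro x
    rcases eq_or_lt_of_le hp0 with h | h
    · simp [hDdef, ← h]
    · have := mul_pos h (exp_pos x)
      simp only [hDdef]; nlinarith
  -- derivative of D
  have hD : ∀ x, HasDerivAt D (p * exp x) x := fun x =>
    ((Real.hasDerivAt_exp x).const_mul p).const_add (1 - p)
  set g1 : ℝ → ℝ := fun x => p + x / 4 - p * exp x / D x with hg1def
  set g : ℝ → ℝ := fun x => p * x + x ^ 2 / 8 - Real.log (D x) with hgdef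
  have hg : ∀ x, HasDerivAt g (g1 x) x := by
    intro x
    have h1 : HasDerivAt (fun y : ℝ => p * y + y ^ 2 / 8) (p + x / 4) x := by
      have := ((hasDerivAt_id x).const_mul p).add ((hasDerivAt_pow 2 x).div_const 8)
      exact this.congr_deriv (by norm_num; ring)
    have h2 : HasDerivAt (fun y => Real.log (D y)) (p * exp x / D x) x :=
      (hD x).log (hDpos x).ne'
    exact h1.sub h2
  set g2 : ℝ → ℝ := fun x =>
    1 / 4 - (p * exp x * D x - p * exp x * (p * exp x)) / D x ^ 2 with hg2def
  have hg1 : ∀ x, HasDerivAt g1 (g2 x) x := by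
    intro x
    have hq : HasDerivAt (fun y => p * exp y / D y)
        ((p * exp x * D x - p * exp x * (p * exp x)) / D x ^ 2) x :=
      ((Real.hasDerivAt_exp x).const_mul p).div (hD x) (hDpos x).ne'
    have h1 : HasDerivAt (fun y : ℝ => p + y / 4) (1 / 4) x := by
      simpa using ((hasDerivAt_id x).div_const 4).const_add p
    exact h1.sub hq
  have hg2nonneg : ∀ x, 0 ≤ g2 x := by
    intro x
    have hDx := hDpos x
    have hE := exp_pos x
    rw [hg2def]
    rw [sub_nonneg, div_le_iff₀ (by positivity)]
    have : D x = 1 - p + p * exp x := rfl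
    nlinarith [sq_nonneg ((1 - p) - p * exp x)]
  have hg1mono : Monotone g1 :=
    monotone_of_deriv_nonneg (fun x => (hg1 x).differentiableAt)
      (fun x => by rw [(hg1 x).deriv]; exact hg2nonneg x)
  have hg1zero : g1 0 = 0 := by
    simp [hg1def, hDdef]
  have hgzero : g 0 = 0 := by
    simp [hgdef, hDdef]
  have hgnonneg : ∀ x, 0 ≤ g x := by
    intro x
    rcases le_total 0 x with hx | hx
    · have hmono : MonotoneOn g (Set.Ici 0) := by
        refine monotoneOn_of_deriv_nonneg (convex_Ici 0)
          (fun y _ => (hg y).continuousAt.continuousWithinAt)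
          (fun y _ => (hg y).differentiableAt.differentiableWithinAt) ?_
        intro y hy
        rw [(hg y).deriv, ← hg1zero]
        exact hg1mono (le_of_lt (by simpa using hy))
      have := hmono Set.self_mem_Ici (Set.mem_Ici.2 hx) hx
      linarith [hgzero ▸ this]
    · have hanti : AntitoneOn g (Set.Iic 0) := by
        refine antitoneOn_of_deriv_nonpos (convex_Iic 0)
          (fun y _ => (hg y).continuousAt.continuousWithinAt)
          (fun y _ => (hg y).differentiableAt.differentiableWithinAt) ?_
        intro y hy
        rw [(hg y).deriv, ← hg1zero]
        exact hg1mono (le_of_lt (by simpa using hy))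
      have := hanti (Set.mem_Iic.2 hx) Set.self_mem_Iic hx
      linarith [hgzero ▸ this]
  have hlog : Real.log (D t) ≤ p * t + t ^ 2 / 8 := by
    have := hgnonneg t
    simp only [hgdef] at this
    linarith
  calc 1 - p + p * exp t = exp (Real.log (D t)) := by rw [exp_log (hDpos t)]
  _ ≤ exp (p * t + t ^ 2 / 8) := exp_le_exp.2 hlog

lemma integrable_of_mem_Icc {Ω : Type*} [MeasurableSpace Ω] {μ : Measure Ω}
    [IsFiniteMeasure μ] {X : Ω → ℝ} (hX : Measurable X) {a b : ℝ}
    (hb : ∀ ω, X ω ∈ Set.Icc a b) : Integrable X μ := by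
  refine ⟨hX.aestronglyMeasurable, HasFiniteIntegral.of_bounded
    (C := |a| + |b|) (ae_of_all μ fun ω => ?_)⟩
  have h := hb ω
  rw [Real.norm_eq_abs, abs_le]
  constructor <;> nlinarith [le_abs_self a, neg_abs_le a, le_abs_self b, neg_abs_le b,
    h.1, h.2]

lemma integrable_exp_mul_of_mem_Icc {Ω : Type*} [MeasurableSpace Ω] {μ : Measure Ω}
    [IsFiniteMeasure μ] {X : Ω → ℝ} (hX : Measurable X) {a b : ℝ}
    (hb : ∀ ω, X ω ∈ Set.Icc a b) (t : ℝ) :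
    Integrable (fun ω => exp (t * X ω)) μ := by
  refine ⟨((hX.const_mul t).exp).aestronglyMeasurable, HasFiniteIntegral.of_bounded
    (C := exp (|t| * (|a| + |b|))) (ae_of_all μ fun ω => ?_)⟩
  have h := hb ω
  have hXb : |X ω| ≤ |a| + |b| := by
    rw [abs_le]
    constructor <;> nlinarith [le_abs_self a, neg_abs_le a, le_abs_self b, neg_abs_le b,
      h.1, h.2]
  rw [Real.norm_eq_abs, abs_exp]
  apply exp_le_exp.2
  calc t * X ω ≤ |t * X ω| := le_abs_self _
  _ = |t| * |X ω| := abs_mul _ _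
  _ ≤ |t| * (|a| + |b|) := by
      exact mul_le_mul_of_nonneg_left hXb (abs_nonneg t)

/-- Hoeffding's lemma for a variable in an interval of length 1. -/
lemma mgf_le_of_mem_Icc {Ω : Type*} [MeasurableSpace Ω] {μ : Measure Ω}
    [IsProbabilityMeasure μ] {X : Ω → ℝ} (hX : Measurable X) {a : ℝ}
    (hb : ∀ ω, X ω ∈ Set.Icc a (a + 1)) (t : ℝ) :
    mgf X μ t ≤ exp (t * (∫ ω, X ω ∂μ) + t ^ 2 / 8) := by
  have hIntX : Integrable X μ := integrable_of_mem_Icc hX hb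
  set m : ℝ := ∫ ω, X ω ∂μ with hm
  have hma : a ≤ m := by
    have := integral_mono (integrable_const a) hIntX (fun ω => (hb ω).1)
    simpa using this
  have hmb : m ≤ a + 1 := by
    have := integral_mono hIntX (integrable_const (a + 1)) (fun ω => (hb ω).2)
    simpa using this
  -- pointwise convexity bound
  have hpt : ∀ ω, exp (t * X ω) ≤
      (a + 1 - X ω) * exp (t * a) + (X ω - a) * exp (t * (a + 1)) := by
    intro ω
    have h := hb ω
    have h1 : (0:ℝ) ≤ a + 1 - X ω := by linarith [h.2]
    have h2 : (0:ℝ) ≤ X ω - a := by linarith [h.1]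
    have := convexOn_exp.2 (Set.mem_univ (t * a)) (Set.mem_univ (t * (a + 1)))
      h1 h2 (by ring)
    simp only [smul_eq_mul] at this
    calc exp (t * X ω)
        = exp ((a + 1 - X ω) * (t * a) + (X ω - a) * (t * (a + 1))) := by ring_nf
      _ ≤ (a + 1 - X ω) * exp (t * a) + (X ω - a) * exp (t * (a + 1)) := this
  have h1 : Integrable (fun ω => (a + 1 - X ω) * exp (t * a)) μ :=
    ((integrable_const (a + 1)).sub hIntX).mul_const _
  have h2 : Integrable (fun ω => (X ω - a) * exp (t * (a + 1))) μ :=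
    (hIntX.sub (integrable_const a)).mul_const _
  have hIntRHS : Integrable
      (fun ω => (a + 1 - X ω) * exp (t * a) + (X ω - a) * exp (t * (a + 1))) μ :=
    h1.add h2
  have hIntExp : Integrable (fun ω => exp (t * X ω)) μ :=
    integrable_exp_mul_of_mem_Icc hX hb t
  have hstep : mgf X μ t ≤ (a + 1 - m) * exp (t * a) + (m - a) * exp (t * (a + 1)) := by
    rw [mgf]
    calc ∫ ω, exp (t * X ω) ∂μ
        ≤ ∫ ω, ((a + 1 - X ω) * exp (t * a) + (X ω - a) * exp (t * (a + 1))) ∂μ :=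
          integral_mono hIntExp hIntRHS hpt
      _ = (a + 1 - m) * exp (t * a) + (m - a) * exp (t * (a + 1)) := by
          rw [integral_add h1 h2,
            integral_mul_const, integral_mul_const, integral_sub (integrable_const _) hIntX,
            integral_sub hIntX (integrable_const _)]
          simp [hm]
  set p : ℝ := m - a with hp
  have hp0 : 0 ≤ p := by linarith
  have hp1 : p ≤ 1 := by linarith
  calc mgf X μ t ≤ (a + 1 - m) * exp (t * a) + (m - a) * exp (t * (a + 1)) := hstep
    _ = exp (t * a) * (1 - p + p * exp t) := by
        rw [show t * (a + 1) = t * a + t by ring, exp_add]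
        ring
    _ ≤ exp (t * a) * exp (p * t + t ^ 2 / 8) := by
        exact mul_le_mul_of_nonneg_left (hoeff_core hp0 hp1 t) (exp_pos _).le
    _ = exp (t * m + t ^ 2 / 8) := by
        rw [← exp_add]; congr 1; simp only [hp]; ring

/-- Concentration of the drift in the biased 2-choices rule: conditionally on
the shifted imbalance being `ε' ≥ 2λ_n²`, with `B_t ≥ nγ` and `n·ε'² ≥ log n`,
if `E[Δ(t)] ≥ (B_t·q1/2)·c·ε'` and `Δ(t)` is a sum of at most `n` independent
random variables each ranging over an interval of length 1, then
`P(Δ(t) ≤ (B_t·q1/4)·c·ε') ≤ 2/n^α`, where `α = γ²q1²c²/8`. -/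
theorem stmt_15 {Ω : Type*} [MeasurableSpace Ω] (μ : Measure Ω) [IsProbabilityMeasure μ]
    (n : ℕ) (hn : 0 < n) (q1 c γ lam eps' Bt : ℝ)
    (hq1 : q1 ∈ Set.Ioo (0:ℝ) 1) (hc : c ∈ Set.Ioo (0:ℝ) 1) (hγ : γ ∈ Set.Ioo (0:ℝ) 1)
    (heps : 2 * lam ^ 2 ≤ eps')
    (hBt : (n : ℝ) * γ ≤ Bt) (hBtn : Bt ≤ n)
    (hlog : Real.log n ≤ n * eps' ^ 2)
    {ι : Type*} [Fintype ι] (hcard : Fintype.card ι ≤ n)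
    (Y : ι → Ω → ℝ) (a : ι → ℝ) (hmeas : ∀ l, Measurable (Y l))
    (hindep : iIndepFun Y μ)
    (hbdd : ∀ l, ∀ ω, Y l ω ∈ Set.Icc (a l) (a l + 1))
    (hdrift : Bt * q1 / 2 * c * eps' ≤ ∫ ω, (∑ l, Y l ω) ∂μ) :
    (μ {ω | (∑ l, Y l ω) ≤ Bt * q1 / 4 * c * eps'}).toReal
      ≤ 2 / (n : ℝ) ^ (γ ^ 2 * q1 ^ 2 * c ^ 2 / 8) := by
  have hn1 : (1:ℝ) ≤ n := by exact_mod_cast hn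
  have hn0 : (0:ℝ) < n := by linarith
  have heps0 : 0 ≤ eps' := le_trans (by positivity) heps
  have hBt0 : 0 < Bt := lt_of_lt_of_le (mul_pos hn0 hγ.1) hBt
  obtain ⟨ε, hεdef⟩ : ∃ x : ℝ, x = Bt * q1 / 4 * c * eps' := ⟨_, rfl⟩
  obtain ⟨X, hXdef⟩ : ∃ f : Ω → ℝ, f = fun ω => ∑ l, Y l ω := ⟨_, rfl⟩
  have hgoalEq : {ω | (∑ l, Y l ω) ≤ Bt * q1 / 4 * c * eps'} = {ω | X ω ≤ ε} := by
    rw [hXdef, hεdef]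
  rw [hgoalEq]
  have hε0 : 0 ≤ ε := by
    rw [hεdef]
    exact mul_nonneg (mul_nonneg (div_nonneg (mul_nonneg hBt0.le hq1.1.le) (by norm_num))
      hc.1.le) heps0
  obtain ⟨s, hsdef⟩ : ∃ x : ℝ, x = 4 * ε / n := ⟨_, rfl⟩
  have hs0 : 0 ≤ s := by
    rw [hsdef]; exact div_nonneg (by linarith) hn0.le
  have hXsum : X = ∑ l, Y l := by
    rw [hXdef]; ext ω; simp [Finset.sum_apply]
  have hXmeas : Measurable X := by
    rw [hXdef]; exact Finset.measurable_sum univ (fun i _ => hmeas i)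
  have hXbdd : ∀ ω, X ω ∈ Set.Icc (∑ l, a l) ((∑ l, a l) + n) := by
    intro ω
    rw [hXdef]
    constructor
    · exact Finset.sum_le_sum fun i _ => (hbdd i ω).1
    · calc (∑ l, Y l ω) ≤ ∑ l, (a l + 1) := Finset.sum_le_sum fun i _ => (hbdd i ω).2
        _ = (∑ l, a l) + Fintype.card ι := by
            rw [Finset.sum_add_distrib]; simp [Finset.card_univ]
        _ ≤ (∑ l, a l) + n := by
            have : (Fintype.card ι : ℝ) ≤ n := by exact_mod_cast hcard
            linarith
  have hIntX : Integrable X μ := integrable_of_mem_Icc hXmeas hXbdd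
  have hIntExp : Integrable (fun ω => exp (-s * X ω)) μ :=
    integrable_exp_mul_of_mem_Icc hXmeas hXbdd (-s)
  -- drift: 2ε ≤ E X
  have hEX : 2 * ε ≤ ∫ ω, X ω ∂μ := by
    have h2e : Bt * q1 / 2 * c * eps' = 2 * ε := by rw [hεdef]; ring
    have : (∫ ω, (∑ l, Y l ω) ∂μ) = ∫ ω, X ω ∂μ := by rw [hXdef]
    linarith [hdrift, this.symm.le]
  -- Chernoff
  have hcher : (μ {ω | X ω ≤ ε}).toReal ≤ exp (-(-s) * ε) * mgf X μ (-s) :=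
    measure_le_le_exp_mul_mgf ε (neg_nonpos.2 hs0) hIntExp
  -- mgf bound
  have hmgf : mgf X μ (-s) ≤ exp (-s * (∫ ω, X ω ∂μ) + Fintype.card ι * (s ^ 2 / 8)) := by
    have hprod : mgf X μ (-s) = ∏ l, mgf (Y l) μ (-s) := by
      rw [hXsum]; exact hindep.mgf_sum hmeas univ
    have hEXeq : (∫ ω, X ω ∂μ) = ∑ l, ∫ ω, Y l ω ∂μ := by
      rw [hXdef]
      exact integral_finset_sum univ fun i _ =>
        integrable_of_mem_Icc (hmeas i) (hbdd i)
    rw [hprod, hEXeq]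
    calc ∏ l, mgf (Y l) μ (-s)
        ≤ ∏ l, exp (-s * (∫ ω, Y l ω ∂μ) + s ^ 2 / 8) := by
          apply Finset.prod_le_prod (fun i _ => mgf_nonneg)
          intro i _
          have h := mgf_le_of_mem_Icc (μ := μ) (hmeas i) (hbdd i) (-s)
          rwa [neg_sq s] at h
      _ = exp (∑ l, (-s * (∫ ω, Y l ω ∂μ) + s ^ 2 / 8)) := by
          rw [Real.exp_sum]
      _ = exp (-s * (∑ l, ∫ ω, Y l ω ∂μ) + Fintype.card ι * (s ^ 2 / 8)) := by
          congr 1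
          rw [Finset.sum_add_distrib, ← Finset.mul_sum]
          simp [Finset.card_univ]
  -- numeric combination
  have hcard' : (Fintype.card ι : ℝ) ≤ n := by exact_mod_cast hcard
  have hfinal : exp (-(-s) * ε) * mgf X μ (-s) ≤ exp (-(2 * ε ^ 2 / n)) := by
    calc exp (-(-s) * ε) * mgf X μ (-s)
        ≤ exp (s * ε) * exp (-s * (∫ ω, X ω ∂μ) + Fintype.card ι * (s ^ 2 / 8)) := by
          rw [neg_neg]
          exact mul_le_mul_of_nonneg_left hmgf (exp_pos _).le
      _ = exp (s * ε + (-s * (∫ ω, X ω ∂μ) + Fintype.card ι * (s ^ 2 / 8))) := by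
          rw [← exp_add]
      _ ≤ exp (-(2 * ε ^ 2 / n)) := by
          apply exp_le_exp.2
          have h1 : s * (2 * ε) ≤ s * (∫ ω, X ω ∂μ) :=
            mul_le_mul_of_nonneg_left hEX hs0
          have h2 : (Fintype.card ι : ℝ) * (s ^ 2 / 8) ≤ n * (s ^ 2 / 8) :=
            mul_le_mul_of_nonneg_right hcard' (by positivity)
          calc s * ε + (-s * (∫ ω, X ω ∂μ) + Fintype.card ι * (s ^ 2 / 8))
              ≤ s * ε + (-(s * (2 * ε)) + n * (s ^ 2 / 8)) := by linarith
            _ = -(2 * ε ^ 2 / n) := by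
                rw [hsdef]
                field_simp
                ring
  -- conclude
  have hrpow : (n:ℝ) ^ (γ ^ 2 * q1 ^ 2 * c ^ 2 / 8) =
      exp (γ ^ 2 * q1 ^ 2 * c ^ 2 / 8 * Real.log n) := by
    rw [Real.rpow_def_of_pos hn0, mul_comm]
  have hexp_le : γ ^ 2 * q1 ^ 2 * c ^ 2 / 8 * Real.log n ≤ 2 * ε ^ 2 / n := by
    have hlogn0 : 0 ≤ Real.log n := Real.log_nonneg hn1
    have hBtsq : (n:ℝ) ^ 2 * γ ^ 2 ≤ Bt ^ 2 := by
      have h := pow_le_pow_left₀ (mul_nonneg hn0.le hγ.1.le) hBt 2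
      calc (n:ℝ) ^ 2 * γ ^ 2 = ((n:ℝ) * γ) ^ 2 := by ring
        _ ≤ Bt ^ 2 := h
    have h1 : γ ^ 2 * q1 ^ 2 * c ^ 2 / 8 * Real.log n
        ≤ γ ^ 2 * q1 ^ 2 * c ^ 2 / 8 * (n * eps' ^ 2) :=
      mul_le_mul_of_nonneg_left hlog (by positivity)
    have hε2 : (n:ℝ) ^ 2 * (γ ^ 2 * q1 ^ 2 * c ^ 2) * eps' ^ 2 / 16 ≤ ε ^ 2 := by
      rw [hεdef]
      nlinarith [mul_nonneg (sub_nonneg.2 hBtsq)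
        (by positivity : (0:ℝ) ≤ q1 ^ 2 * c ^ 2 * eps' ^ 2)]
    have h2 : γ ^ 2 * q1 ^ 2 * c ^ 2 / 8 * (n * eps' ^ 2) ≤ 2 * ε ^ 2 / n := by
      rw [le_div_iff₀ hn0]
      linarith [hε2]
    linarith
  calc (μ {ω | X ω ≤ ε}).toReal
      ≤ exp (-(2 * ε ^ 2 / n)) := le_trans hcher hfinal
    _ ≤ exp (-(γ ^ 2 * q1 ^ 2 * c ^ 2 / 8 * Real.log n)) :=
        exp_le_exp.2 (by linarith)
    _ ≤ 2 / (n:ℝ) ^ (γ ^ 2 * q1 ^ 2 * c ^ 2 / 8) := by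
        rw [hrpow, exp_neg, le_div_iff₀ (exp_pos _),
          inv_mul_cancel₀ (exp_pos _).ne']
        norm_num
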